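/- For positive integers k₁,…,k_d with k₁, k_d ≥ 2, the series ∑_{-∞<m₁<⋯<m_d<∞} ∏_{i=1}^d 1/(z+m_i)^{k_i} converges absolutely for every z ∈ ℂ \ ℤ, defining the multitangent function Ψ_{k₁,…,k_d}(z). -/

import Mathlib

open scoped BigOperators
open Real

/-- The Hurwitz multiple zeta value `ζ^{(z)}(l₁,…,l_r) = ∑_{0<n₁<⋯<n_r} ∏ 1/(z+n_i)^{l_i}`. -/
noncomputable def HMZV (z : ℂ) (l : List ℕ) : ℂ :=
  ∑' n : {f : Fin l.length → ℕ+ // StrictMono f}, ∏ i, 1 / (z + ((n.1 i : ℕ) : ℂ)) ^ l.get i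

/-- The multitangent function `Ψ_{k₁,…,k_d}(z) = ∑_{-∞<m₁<⋯<m_d<∞} ∏ 1/(z+m_i)^{k_i}`. -/
noncomputable def MTF (k : List ℕ) (z : ℂ) : ℂ :=
  ∑' m : {f : Fin k.length → ℤ // StrictMono f}, ∏ i, 1 / (z + (m.1 i : ℂ)) ^ k.get i

lemma summable_shift_rpow {p : ℝ} (hp : 1 < p) :
    Summable (fun n : ℕ => (((n : ℝ) + 1) ^ p)⁻¹) := by
  have h := (Real.summable_nat_rpow_inv (p := p)).2 hp
  have h2 := h.comp_injective Nat.succ_injective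
  refine h2.congr fun n => ?_
  simp [Function.comp, Nat.succ_eq_add_one]

lemma summable_pi_prod {f : ℕ → ℝ} (hf : Summable f) (hf0 : ∀ n, 0 ≤ f n) :
    ∀ r : ℕ, Summable (fun y : Fin r → ℕ => ∏ i, f (y i)) := by
  intro r
  induction r with
  | zero =>
    have : (fun y : Fin 0 → ℕ => ∏ i, f (y i)) = fun _ => 1 := by
      funext y; simp
    rw [this]
    exact summable_of_finite_support (Set.toFinite _)
  | succ n ih =>
    have hg0 : 0 ≤ fun y : Fin n → ℕ => ∏ i, f (y i) :=
      fun y => Finset.prod_nonneg fun i _ => hf0 _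
    have h : Summable (fun x : ℕ × (Fin n → ℕ) => f x.1 * ∏ i, f (x.2 i)) :=
      Summable.mul_of_nonneg (f := f) (g := fun y : Fin n → ℕ => ∏ i, f (y i))
        hf ih (fun n => hf0 n) hg0
    rw [← (Fin.consEquiv (fun _ : Fin (n + 1) => ℕ)).summable_iff]
    refine h.congr fun x => ?_
    simp only [Function.comp_apply, Fin.consEquiv_apply]
    rw [Fin.prod_univ_succ]
    simp

lemma prod_mul_le_prod_pow {d : ℕ} (W : Fin d → ℝ) (hW : ∀ i, 1 ≤ W i) (K : Fin d → ℕ)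
    (hK : ∀ i, 1 ≤ K i) (i0 : Fin d) (h2 : 2 ≤ K i0) :
    (∏ i, W i) * W i0 ≤ ∏ i, W i ^ K i := by
  have he : (∏ i, W i) * W i0 = ∏ i, W i ^ (if i = i0 then 2 else 1) := by
    have : ∀ i : Fin d, W i ^ (if i = i0 then 2 else 1) = W i * (if i = i0 then W i else 1) := by
      intro i; split <;> ring
    rw [Finset.prod_congr rfl (fun i _ => this i), Finset.prod_mul_distrib,
      Finset.prod_ite_eq' Finset.univ i0 W, if_pos (Finset.mem_univ _)]
  rw [he]
  refine Finset.prod_le_prod (fun i _ => pow_nonneg (le_trans zero_le_one (hW i)) _)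
    (fun i _ => pow_le_pow_right₀ (hW i) ?_)
  split_ifs with h
  · subst h; exact h2
  · exact hK i

lemma exists_c_bound (z : ℂ) (hz : ∀ m : ℤ, z ≠ m) (a : ℤ) (ha : a = ⌈-z.re⌉) :
    ∃ c : ℝ, 0 < c ∧ c ≤ 1 ∧ ∀ n : ℤ,
      c * (((if n ≤ a then a + 1 - n else n - a : ℤ)) : ℝ) ≤ ‖z + (n : ℂ)‖ := by
  have hzn : ∀ n : ℤ, z + (n : ℂ) ≠ 0 := by
    intro n h
    exact hz (-n) (by rw [Int.cast_neg]; exact eq_neg_of_add_eq_zero_left h)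
  have hpos : ∀ n : ℤ, 0 < ‖z + (n : ℂ)‖ := fun n => norm_pos_iff.2 (hzn n)
  have habs : ∀ n : ℤ, |z.re + (n : ℝ)| ≤ ‖z + (n : ℂ)‖ := by
    intro n
    have h := Complex.abs_re_le_norm (z + (n : ℂ))
    simpa using h
  have haz1 : -z.re ≤ (a : ℝ) := by rw [ha]; exact Int.le_ceil _
  have haz2 : (a : ℝ) < -z.re + 1 := by rw [ha]; exact Int.ceil_lt_add_one _
  set δ : ℝ := min 1 (min ‖z + ((a - 1 : ℤ) : ℂ)‖ (min ‖z + ((a : ℤ) : ℂ)‖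
    (min ‖z + ((a + 1 : ℤ) : ℂ)‖ ‖z + ((a + 2 : ℤ) : ℂ)‖))) with hδdef
  have hδ1 : δ ≤ 1 := min_le_left _ _
  have hδ0 : 0 < δ := by
    refine lt_min one_pos (lt_min (hpos _) (lt_min (hpos _) (lt_min (hpos _) (hpos _))))
  have hδ : ∀ n : ℤ, δ ≤ ‖z + (n : ℂ)‖ := by
    intro n
    rcases lt_trichotomy n (a - 1) with h | h | h
    · have h1 : (n : ℝ) ≤ (a : ℝ) - 2 := by exact_mod_cast (by omega : n ≤ a - 2)
      have h2 : -(z.re + (n : ℝ)) ≤ |z.re + (n : ℝ)| := neg_le_abs _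
      have := habs n
      linarith
    · subst h
      exact le_trans (min_le_right _ _) (min_le_left _ _)
    · rcases (by omega : n = a ∨ n = a + 1 ∨ n = a + 2 ∨ a + 3 ≤ n) with h' | h' | h' | h'
      · subst h'
        exact le_trans (min_le_right _ _) (le_trans (min_le_right _ _) (min_le_left _ _))
      · subst h'
        exact le_trans (min_le_right _ _) (le_trans (min_le_right _ _)
          (le_trans (min_le_right _ _) (min_le_left _ _)))
      · subst h'
        exact le_trans (min_le_right _ _) (le_trans (min_le_right _ _)
          (le_trans (min_le_right _ _) (min_le_right _ _)))
      · have h1 : (a : ℝ) + 3 ≤ (n : ℝ) := by exact_mod_cast h'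
        have h2 : z.re + (n : ℝ) ≤ |z.re + (n : ℝ)| := le_abs_self _
        have := habs n
        linarith
  refine ⟨δ / 3, by linarith, by linarith, ?_⟩
  intro n
  by_cases hn : n ≤ a
  · rw [if_pos hn]
    by_cases hw : a + 1 - n ≤ 3
    · have h1 : ((a + 1 - n : ℤ) : ℝ) ≤ 3 := by exact_mod_cast hw
      have h2 : (1 : ℝ) ≤ ((a + 1 - n : ℤ) : ℝ) := by
        exact_mod_cast (by omega : (1:ℤ) ≤ a + 1 - n)
      have := hδ n
      nlinarith
    · have h1 : (4 : ℝ) ≤ ((a + 1 - n : ℤ) : ℝ) := by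
        exact_mod_cast (by omega : (4:ℤ) ≤ a + 1 - n)
      have h2 : -(z.re + (n : ℝ)) ≤ |z.re + (n : ℝ)| := neg_le_abs _
      have h3 := habs n
      have h4 : ((a + 1 - n : ℤ) : ℝ) = (a : ℝ) + 1 - (n : ℝ) := by push_cast; ring
      nlinarith
  · rw [if_neg hn]
    have h1 : (1 : ℝ) ≤ ((n - a : ℤ) : ℝ) := by exact_mod_cast (by omega : (1:ℤ) ≤ n - a)
    have h2 : z.re + (n : ℝ) ≤ |z.re + (n : ℝ)| := le_abs_self _
    have h3 := habs n
    have h4 : ((n - a : ℤ) : ℝ) = (n : ℝ) - (a : ℝ) := by push_cast; ring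
    nlinarith

lemma multitangent_aux (d : ℕ) (hd : 0 < d) (K : Fin d → ℕ) (hK1 : ∀ i, 1 ≤ K i)
    (hKf : 2 ≤ K ⟨0, hd⟩) (hKl : 2 ≤ K ⟨d - 1, by omega⟩)
    (z : ℂ) (hz : ∀ m : ℤ, z ≠ m) :
    Summable (fun m : {f : Fin d → ℤ // StrictMono f} =>
      ∏ i, (‖z + (m.1 i : ℂ)‖ ^ K i)⁻¹) := by
  classical
  set T := {f : Fin d → ℤ // StrictMono f} with hT
  set a : ℤ := ⌈-z.re⌉ with hadef
  obtain ⟨c, hc0, hc1, hc⟩ := exists_c_bound z hz a hadef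
  set W : ℤ → ℤ := fun n => if n ≤ a then a + 1 - n else n - a with hWdef
  have hW1 : ∀ n, 1 ≤ W n := fun n => by simp only [hWdef]; split <;> omega
  have hWc : ∀ n : ℤ, c * ((W n : ℤ) : ℝ) ≤ ‖z + (n : ℂ)‖ := fun n => by
    simp only [hWdef]; exact hc n
  set i0 : Fin d := ⟨0, hd⟩ with hi0
  set il : Fin d := ⟨d - 1, by omega⟩ with hil
  -- the count of left elements
  set jm : T → ℕ := fun m => (Finset.univ.filter fun i : Fin d => m.1 i ≤ a).card with hjmdef
  have hjle : ∀ m : T, jm m ≤ d := by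
    intro m
    simp only [hjmdef]
    calc (Finset.univ.filter fun i : Fin d => m.1 i ≤ a).card
        ≤ Finset.univ.card := Finset.card_filter_le _ _
      _ = d := by simp
  have hjchar : ∀ (m : T) (i : Fin d), m.1 i ≤ a ↔ i.val < jm m := by
    intro m i
    constructor
    · intro h
      have hsub : Finset.Iic i ⊆ Finset.univ.filter fun i' : Fin d => m.1 i' ≤ a := by
        intro i' hi'
        rw [Finset.mem_Iic] at hi'
        rw [Finset.mem_filter]
        exact ⟨Finset.mem_univ _, le_trans (m.2.monotone hi') h⟩
      have hcard := Finset.card_le_card hsub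
      rw [Fin.card_Iic] at hcard
      simp only [hjmdef]
      omega
    · intro h
      by_contra hcon
      push_neg at hcon
      have hsub : (Finset.univ.filter fun i' : Fin d => m.1 i' ≤ a) ⊆ Finset.Iio i := by
        intro i' hi'
        rw [Finset.mem_filter] at hi'
        rw [Finset.mem_Iio]
        exact m.2.lt_iff_lt.1 (lt_of_le_of_lt hi'.2 hcon)
      have hcard := Finset.card_le_card hsub
      rw [Fin.card_Iio] at hcard
      simp only [hjmdef] at h
      omega
  -- gap coordinates
  set xm : T → Fin d → ℤ := fun m i =>
    if h : i.val + 1 < jm m then m.1 ⟨i.val + 1, lt_of_lt_of_le h (hjle m)⟩ - m.1 i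
    else if i.val + 1 = jm m then a + 1 - m.1 i
    else if i.val = jm m then m.1 i - a
    else m.1 i - m.1 ⟨i.val - 1, lt_of_le_of_lt (Nat.sub_le _ _) i.isLt⟩ with hxmdef
  have hxe1 : ∀ (m : T) (i : Fin d) (h : i.val + 1 < jm m),
      xm m i = m.1 ⟨i.val + 1, lt_of_lt_of_le h (hjle m)⟩ - m.1 i := by
    intro m i h; simp only [hxmdef]; rw [dif_pos h]
  have hxe2 : ∀ (m : T) (i : Fin d), i.val + 1 = jm m → xm m i = a + 1 - m.1 i := by
    intro m i h; simp only [hxmdef]; rw [dif_neg (by omega), if_pos h]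
  have hxe3 : ∀ (m : T) (i : Fin d), i.val = jm m → xm m i = m.1 i - a := by
    intro m i h; simp only [hxmdef]; rw [dif_neg (by omega), if_neg (by omega), if_pos h]
  have hxe4 : ∀ (m : T) (i : Fin d), jm m < i.val →
      xm m i = m.1 i - m.1 ⟨i.val - 1, lt_of_le_of_lt (Nat.sub_le _ _) i.isLt⟩ := by
    intro m i h; simp only [hxmdef]
    rw [dif_neg (by omega), if_neg (by omega), if_neg (by omega)]
  -- basic facts
  have hx1 : ∀ (m : T) (i : Fin d), 1 ≤ xm m i := by
    intro m i
    rcases Nat.lt_trichotomy i.val (jm m) with hlt | heq | hgt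
    · rcases Nat.lt_or_ge (i.val + 1) (jm m) with h1 | h1
      · rw [hxe1 m i h1]
        have := m.2 (show i < ⟨i.val + 1, lt_of_lt_of_le h1 (hjle m)⟩ by
          rw [Fin.lt_def]; simp)
        omega
      · have h2 : i.val + 1 = jm m := by omega
        rw [hxe2 m i h2]
        have := (hjchar m i).2 hlt
        omega
    · rw [hxe3 m i heq]
      have : ¬ (m.1 i ≤ a) := fun hcon => by have := (hjchar m i).1 hcon; omega
      omega
    · rw [hxe4 m i hgt]
      have := m.2 (show (⟨i.val - 1, lt_of_le_of_lt (Nat.sub_le _ _) i.isLt⟩ : Fin d) < i by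
        rw [Fin.lt_def]; simp; omega)
      omega
  have hxW : ∀ (m : T) (i : Fin d), xm m i ≤ W (m.1 i) := by
    intro m i
    simp only [hWdef]
    rcases Nat.lt_trichotomy i.val (jm m) with hlt | heq | hgt
    · have hia : m.1 i ≤ a := (hjchar m i).2 hlt
      rw [if_pos hia]
      rcases Nat.lt_or_ge (i.val + 1) (jm m) with h1 | h1
      · rw [hxe1 m i h1]
        have hia2 : m.1 ⟨i.val + 1, lt_of_lt_of_le h1 (hjle m)⟩ ≤ a :=
          (hjchar m _).2 (by simpa using h1)
        omega
      · have h2 : i.val + 1 = jm m := by omega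
        rw [hxe2 m i h2]
    · have hia : ¬ (m.1 i ≤ a) := fun hcon => by have := (hjchar m i).1 hcon; omega
      rw [if_neg hia, hxe3 m i heq]
    · have hia : ¬ (m.1 i ≤ a) := fun hcon => by have := (hjchar m i).1 hcon; omega
      rw [if_neg hia, hxe4 m i hgt]
      have hprev : ¬ (m.1 ⟨i.val - 1, lt_of_le_of_lt (Nat.sub_le _ _) i.isLt⟩ ≤ a) := by
        intro hcon
        have := (hjchar m _).1 hcon
        simp at this
        omega
      omega
  have hxmax : ∀ (m : T) (i : Fin d), xm m i ≤ max (W (m.1 i0)) (W (m.1 il)) := by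
    intro m i
    rcases Nat.lt_or_ge i.val (jm m) with hlt | hge
    · refine le_trans ?_ (le_max_left _ _)
      have h0a : m.1 i0 ≤ a := (hjchar m i0).2 (by simp only [hi0]; omega)
      have hW0 : W (m.1 i0) = a + 1 - m.1 i0 := by simp only [hWdef]; rw [if_pos h0a]
      have hmono : m.1 i0 ≤ m.1 i := m.2.monotone (by rw [Fin.le_def]; simp [hi0])
      rcases Nat.lt_or_ge (i.val + 1) (jm m) with h1 | h1
      · rw [hxe1 m i h1]
        have hia2 : m.1 ⟨i.val + 1, lt_of_lt_of_le h1 (hjle m)⟩ ≤ a :=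
          (hjchar m _).2 (by simpa using h1)
        omega
      · have h2 : i.val + 1 = jm m := by omega
        rw [hxe2 m i h2]
        omega
    · refine le_trans ?_ (le_max_right _ _)
      have hla : ¬ (m.1 il ≤ a) := by
        intro hcon
        have := (hjchar m il).1 hcon
        simp only [hil] at this
        omega
      have hWl : W (m.1 il) = m.1 il - a := by simp only [hWdef]; rw [if_neg hla]
      have hmono : m.1 i ≤ m.1 il := m.2.monotone (by rw [Fin.le_def]; simp [hil]; omega)
      rcases Nat.lt_or_ge (jm m) i.val with hgt | hle2
      · rw [hxe4 m i hgt]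
        have hprev : ¬ (m.1 ⟨i.val - 1, lt_of_le_of_lt (Nat.sub_le _ _) i.isLt⟩ ≤ a) := by
          intro hcon
          have := (hjchar m _).1 hcon
          simp at this
          omega
        omega
      · have heq : i.val = jm m := by omega
        rw [hxe3 m i heq]
        omega
  -- the injection
  set Φ : T → Fin (d + 1) × (Fin d → ℕ) := fun m =>
    (⟨jm m, Nat.lt_succ_of_le (hjle m)⟩, fun i => (xm m i - 1).toNat) with hΦdef
  have hΦinj : Function.Injective Φ := by
    intro m m' h
    have hj : jm m = jm m' := by
      have := congrArg (fun q => (Prod.fst q).val) h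
      simpa [hΦdef] using this
    have hx : ∀ i, xm m i = xm m' i := by
      intro i
      have h2 := congrArg (fun q : Fin (d + 1) × (Fin d → ℕ) => q.2 i) h
      simp only [hΦdef] at h2
      have e1 := hx1 m i
      have e2 := hx1 m' i
      omega
    have hright : ∀ t : ℕ, ∀ i : Fin d, i.val = jm m + t → m.1 i = m'.1 i := by
      intro t
      induction t with
      | zero =>
        intro i hi
        have e1 := hxe3 m i (by omega)
        have e2 := hxe3 m' i (by omega)
        have e3 := hx i
        omega
      | succ t ih =>
        intro i hi
        have e1 := hxe4 m i (by omega)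
        have e2 := hxe4 m' i (by omega)
        have hprev := ih ⟨i.val - 1, lt_of_le_of_lt (Nat.sub_le _ _) i.isLt⟩ (by simp; omega)
        have e3 := hx i
        omega
    have hleft : ∀ t : ℕ, ∀ i : Fin d, i.val + 1 + t = jm m → m.1 i = m'.1 i := by
      intro t
      induction t with
      | zero =>
        intro i hi
        have e1 := hxe2 m i (by omega)
        have e2 := hxe2 m' i (by omega)
        have e3 := hx i
        omega
      | succ t ih =>
        intro i hi
        have h1 : i.val + 1 < jm m := by omega
        have e1 := hxe1 m i h1
        have e2 := hxe1 m' i (by omega)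
        have hprev := ih ⟨i.val + 1, lt_of_lt_of_le h1 (hjle m)⟩ (by simp; omega)
        have e3 := hx i
        omega
    refine Subtype.ext (funext fun i => ?_)
    rcases Nat.lt_or_ge i.val (jm m) with h' | h'
    · exact hleft (jm m - 1 - i.val) i (by omega)
    · exact hright (i.val - jm m) i (by omega)
  -- the dominating function
  set p : ℝ := 1 + 1 / d with hpdef
  have hdR : (0:ℝ) < d := by exact_mod_cast hd
  have hp1 : 1 < p := by
    rw [hpdef]
    have : (0:ℝ) < 1 / d := by positivity
    linarith
  set N : ℕ := ∑ i, K i with hNdef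
  set C : ℝ := (c ^ N)⁻¹ with hCdef
  have hC0 : 0 ≤ C := by positivity
  set G : Fin (d + 1) × (Fin d → ℕ) → ℝ :=
    fun q => C * ∏ i, (((q.2 i : ℝ) + 1) ^ p)⁻¹ with hGdef
  have hGsum : Summable G := by
    have h1 := summable_shift_rpow hp1
    have h2 := summable_pi_prod h1 (fun n => by positivity) d
    have h3 : Summable (fun _ : Fin (d + 1) => C) :=
      summable_of_finite_support (Set.toFinite _)
    exact Summable.mul_of_nonneg (f := fun _ : Fin (d + 1) => C)
      (g := fun y : Fin d → ℕ => ∏ i, (((y i : ℝ) + 1) ^ p)⁻¹)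
      h3 h2 (fun _ => hC0) (fun y => Finset.prod_nonneg fun i _ => by positivity)
  -- the key bound
  have key : ∀ m : T, ∏ i, (‖z + (m.1 i : ℂ)‖ ^ K i)⁻¹ ≤ G (Φ m) := by
    intro m
    set Wr : Fin d → ℝ := fun i => ((W (m.1 i) : ℤ) : ℝ) with hWrdef
    set xr : Fin d → ℝ := fun i => ((xm m i : ℤ) : ℝ) with hxrdef
    have hWr1 : ∀ i, 1 ≤ Wr i := fun i => by
      simp only [hWrdef]; exact_mod_cast hW1 (m.1 i)
    have hxr1 : ∀ i, 1 ≤ xr i := fun i => by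
      simp only [hxrdef]; exact_mod_cast hx1 m i
    have hxrW : ∀ i, xr i ≤ Wr i := fun i => by
      simp only [hxrdef, hWrdef]; exact_mod_cast hxW m i
    set M : ℝ := max (Wr i0) (Wr il) with hMdef
    have hM1 : 1 ≤ M := le_trans (hWr1 i0) (le_max_left _ _)
    have hxrM : ∀ i, xr i ≤ M := by
      intro i
      have h := hxmax m i
      have h2 : (xm m i : ℝ) ≤ ((max (W (m.1 i0)) (W (m.1 il)) : ℤ) : ℝ) := by exact_mod_cast h
      rw [Int.cast_max] at h2
      exact h2
    have hxrpos : ∀ i, (0:ℝ) < xr i := fun i => lt_of_lt_of_le one_pos (hxr1 i)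
    have hprodx_pos : 0 < ∏ i, xr i := Finset.prod_pos fun i _ => hxrpos i
    have hA : (∏ i, Wr i) * M ≤ ∏ i, Wr i ^ K i := by
      rcases max_cases (Wr i0) (Wr il) with ⟨he, _⟩ | ⟨he, _⟩
      · rw [hMdef, he]; exact prod_mul_le_prod_pow Wr hWr1 K hK1 i0 hKf
      · rw [hMdef, he]; exact prod_mul_le_prod_pow Wr hWr1 K hK1 il hKl
    have hBmax : (∏ i, xr i) ^ (1 / (d:ℝ)) ≤ M := by
      have h1 : ∏ i, xr i ≤ M ^ d := by
        calc ∏ i, xr i ≤ ∏ _i : Fin d, M :=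
              Finset.prod_le_prod (fun i _ => (hxrpos i).le) (fun i _ => hxrM i)
          _ = M ^ d := by rw [Finset.prod_const]; simp
      calc (∏ i, xr i) ^ (1 / (d:ℝ))
          ≤ (M ^ d) ^ (1 / (d:ℝ)) := Real.rpow_le_rpow hprodx_pos.le h1 (by positivity)
        _ = M := by
            rw [← Real.rpow_natCast M d, ← Real.rpow_mul (by linarith : (0:ℝ) ≤ M),
              mul_one_div, div_self (ne_of_gt hdR), Real.rpow_one]
    have hB : (∏ i, xr i) ^ p ≤ (∏ i, Wr i) * M := by
      rw [hpdef, Real.rpow_add hprodx_pos, Real.rpow_one]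
      exact mul_le_mul
        (Finset.prod_le_prod (fun i _ => (hxrpos i).le) (fun i _ => hxrW i))
        hBmax (by positivity)
        (Finset.prod_nonneg fun i _ => le_trans zero_le_one (hWr1 i))
    have hCkey : ∏ i, (xr i) ^ p ≤ ∏ i, Wr i ^ K i := by
      rw [Real.finset_prod_rpow _ _ (fun i _ => (hxrpos i).le)]
      exact le_trans hB hA
    have hnorm : ∀ i, c * Wr i ≤ ‖z + (m.1 i : ℂ)‖ := fun i => hWc (m.1 i)
    calc ∏ i, (‖z + (m.1 i : ℂ)‖ ^ K i)⁻¹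
        ≤ ∏ i, ((c * Wr i) ^ K i)⁻¹ := by
          refine Finset.prod_le_prod (fun i _ => by positivity) (fun i _ => ?_)
          have hcw : (0:ℝ) < c * Wr i := by
            have := hWr1 i; nlinarith
          exact inv_anti₀ (pow_pos hcw _)
            (pow_le_pow_left₀ hcw.le (hnorm i) _)
      _ = C * (∏ i, Wr i ^ K i)⁻¹ := by
          rw [Finset.prod_inv_distrib]
          have : ∏ i, (c * Wr i) ^ K i = c ^ N * ∏ i, Wr i ^ K i := by
            simp_rw [mul_pow]
            rw [Finset.prod_mul_distrib, Finset.prod_pow_eq_pow_sum]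
          rw [this, mul_inv, hCdef]
      _ ≤ C * (∏ i, (xr i) ^ p)⁻¹ := by
          refine mul_le_mul_of_nonneg_left ?_ hC0
          have hpp : 0 < ∏ i, (xr i) ^ p :=
            Finset.prod_pos fun i _ => Real.rpow_pos_of_pos (hxrpos i) _
          exact inv_anti₀ hpp hCkey
      _ = G (Φ m) := by
          simp only [hGdef, hΦdef]
          rw [Finset.prod_inv_distrib]
          congr 1
          congr 1
          refine Finset.prod_congr rfl fun i _ => ?_
          congr 1
          have h5 : ((xm m i - 1).toNat : ℤ) = xm m i - 1 :=
            Int.toNat_of_nonneg (by have := hx1 m i; omega)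
          simp only [hxrdef]
          rw [← Int.cast_natCast (R := ℝ), h5]
          push_cast
          ring
  refine Summable.of_nonneg_of_le
    (fun m => Finset.prod_nonneg fun i _ => by positivity) key ?_
  exact hGsum.comp_injective hΦinj

lemma headD_eq_get (l : List ℕ) (h : l ≠ []) (hd : 0 < l.length) :
    l.headD 0 = l.get ⟨0, hd⟩ := by
  cases l with
  | nil => simp at h
  | cons b t => rfl

lemma getLastD_eq_get (l : List ℕ) (h : l ≠ []) (hd : l.length - 1 < l.length) :
    l.getLastD 0 = l.get ⟨l.length - 1, hd⟩ := by
  rw [List.getLastD_eq_getLast?, List.getLast?_eq_getLast h, List.getLast_eq_getElem]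
  simp

theorem multitangent_summable (k : List ℕ) (hpos : ∀ i ∈ k, 0 < i) (hne : k ≠ [])
    (hfirst : 2 ≤ k.headD 0) (hlast : 2 ≤ k.getLastD 0)
    (z : ℂ) (hz : ∀ m : ℤ, z ≠ m) :
    Summable (fun m : {f : Fin k.length → ℤ // StrictMono f} =>
      ‖∏ i, 1 / (z + (m.1 i : ℂ)) ^ k.get i‖) := by
  have hd : 0 < k.length := List.length_pos_iff.2 hne
  have hd1 : k.length - 1 < k.length := by omega
  have hKf : 2 ≤ k.get ⟨0, hd⟩ := by rw [← headD_eq_get k hne hd]; exact hfirst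
  have hKl : 2 ≤ k.get ⟨k.length - 1, hd1⟩ := by
    rw [← getLastD_eq_get k hne hd1]; exact hlast
  have h := multitangent_aux k.length hd (fun i => k.get i)
    (fun i => hpos _ (k.get_mem _)) hKf hKl z hz
  refine h.congr fun m => ?_
  rw [norm_prod]
  refine Finset.prod_congr rfl fun i _ => ?_
  rw [norm_div, norm_one, norm_pow, one_div]
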